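/- Let f ∈ L¹(Ω) be real-valued and let μ ∈ ℝ satisfy |{x ∈ Ω : f(x) > μ}| = V₀ and |{x ∈ Ω : f(x) = μ}| = 0; set V_f := 1_{{x : f(x) > μ}} ∈ M. Then the following two assertions are equivalent: (i) there exists c > 0 such that ∫_Ω f V ≤ ∫_Ω f V_f − c ‖V − V_f‖²_{L¹(Ω)} for every V ∈ M; (ii) limsup_{δ → 0⁺} δ^{−2} · sup{∫_Ω f (V − V_f) : V ∈ M, ‖V − V_f‖_{L¹(Ω)} = δ} < 0, where the inner supremum is interpreted as −∞ when the constraint set is empty. -/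

import Mathlib

open MeasureTheory Filter

/-- The admissible class `M` of potentials. -/
def Adm (d : ℕ) (Ω : Set (EuclideanSpace ℝ (Fin d))) (V₀ : ℝ) :
    Set (EuclideanSpace ℝ (Fin d) → ℝ) :=
  { V | Measurable V ∧ (∀ᵐ x ∂(volume.restrict Ω), 0 ≤ V x ∧ V x ≤ 1) ∧
    (∫ x in Ω, V x) = V₀ }

/-- Convex combinations stay in `[0,1]`. -/
lemma bathtub_aux_bound (t v w : ℝ) (ht0 : 0 ≤ t) (ht1 : t ≤ 1)
    (hv0 : 0 ≤ v) (hv1 : v ≤ 1) (hw0 : 0 ≤ w) (hw1 : w ≤ 1) :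
    0 ≤ w + t * (v - w) ∧ w + t * (v - w) ≤ 1 := by
  constructor <;> nlinarith

/-- Pure real algebra: unscaling the interpolation estimate. -/
lemma bathtub_aux_unscale (I b ε δ : ℝ) (hε : 0 < ε) (hδ : 0 < δ)
    (h : ε / 2 / δ * I < b * (ε / 2) ^ 2) : I < b * (ε / 2) * δ := by
  have h2 : ε / 2 / δ * I * (δ / (ε / 2)) < b * (ε / 2) ^ 2 * (δ / (ε / 2)) :=
    mul_lt_mul_of_pos_right h (by positivity)
  have e1 : ε / 2 / δ * I * (δ / (ε / 2)) = I := by field_simp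
  have e2 : b * (ε / 2) ^ 2 * (δ / (ε / 2)) = b * (ε / 2) * δ := by
    field_simp
  rw [e1, e2] at h2; exact h2

/-- Pure real algebra: final combination in the large-`δ` regime. -/
lemma bathtub_aux_combine (I b ε δ B c : ℝ) (hε : 0 < ε) (hδ : 0 < δ)
    (hδB : δ ≤ B) (hb : b < 0) (hB : 0 < B) (hcpos : 0 < c)
    (hc : c ≤ -b * (ε / 2) / B)
    (h : I < b * (ε / 2) * δ) : I ≤ -c * δ ^ 2 := by
  have hcB : c * B ≤ -b * (ε / 2) := by
    rw [le_div_iff₀ hB] at hc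
    exact hc
  have h3 : c * δ ≤ c * B := mul_le_mul_of_nonneg_left hδB hcpos.le
  have h4 : c * δ * δ ≤ c * B * δ := mul_le_mul_of_nonneg_right h3 hδ.le
  have h5 : c * B * δ ≤ -b * (ε / 2) * δ := mul_le_mul_of_nonneg_right hcB hδ.le
  nlinarith [h4, h5]

/-- The quantitative bathtub inequality for `f` at `V_f = 1_{{f > μ}}` holds if and only
if the normalised deficit `δ⁻² sup{∫_Ω f (V − V_f) : V ∈ M, ‖V − V_f‖_{L¹} = δ}` has
negative limsup as `δ → 0⁺` (the inner supremum being `−∞` when the constraint set is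
empty). -/
theorem quantitative_bathtub_reduction_equiv
    (d : ℕ) (hd : 1 ≤ d)
    (Ω : Set (EuclideanSpace ℝ (Fin d))) (hΩo : IsOpen Ω) (hΩne : Ω.Nonempty)
    (hΩb : Bornology.IsBounded Ω)
    (V₀ : ℝ) (hV₀ : 0 < V₀) (hV₀' : V₀ < (volume Ω).toReal)
    (f : EuclideanSpace ℝ (Fin d) → ℝ) (hf : IntegrableOn f Ω)
    (μ : ℝ)
    (hμ₁ : volume {x ∈ Ω | μ < f x} = ENNReal.ofReal V₀)
    (hμ₂ : volume {x ∈ Ω | f x = μ} = 0)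
    (Vf : EuclideanSpace ℝ (Fin d) → ℝ)
    (hVf : Vf = Set.indicator {x ∈ Ω | μ < f x} (fun _ => (1 : ℝ)))
    (hVfM : Vf ∈ Adm d Ω V₀) :
    (∃ c > 0, ∀ V ∈ Adm d Ω V₀,
        (∫ x in Ω, f x * V x) ≤
          (∫ x in Ω, f x * Vf x) - c * (∫ x in Ω, |V x - Vf x|) ^ 2) ↔
    (Filter.limsup
        (fun δ : ℝ =>
          ⨆ V ∈ { V ∈ Adm d Ω V₀ | (∫ x in Ω, |V x - Vf x|) = δ },
            (((∫ x in Ω, f x * (V x - Vf x)) / δ ^ 2 : ℝ) : EReal))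
        (nhdsWithin 0 (Set.Ioi 0)) < 0) := by
  have hμfin : volume Ω < ⊤ := hΩb.measure_lt_top
  haveI hfin : IsFiniteMeasure (volume.restrict Ω) :=
    ⟨by rwa [Measure.restrict_apply_univ]⟩
  -- integrability of f * V for admissible V
  have hint : ∀ V ∈ Adm d Ω V₀,
      Integrable (fun x => f x * V x) (volume.restrict Ω) := by
    rintro V ⟨hm, hb, -⟩
    refine Integrable.mono hf (hf.aestronglyMeasurable.mul hm.aestronglyMeasurable) ?_
    filter_upwards [hb] with x hx
    rw [Real.norm_eq_abs, Real.norm_eq_abs, abs_mul]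
    have hVle : |V x| ≤ 1 := by rw [abs_of_nonneg hx.1]; exact hx.2
    exact mul_le_of_le_one_right (abs_nonneg _) hVle
  -- integrability of admissible V
  have hintV : ∀ V ∈ Adm d Ω V₀, Integrable V (volume.restrict Ω) := by
    rintro V ⟨hm, hb, -⟩
    refine Integrable.mono' (integrable_const (1 : ℝ)) hm.aestronglyMeasurable ?_
    filter_upwards [hb] with x hx
    rw [Real.norm_eq_abs, abs_of_nonneg hx.1]; exact hx.2
  -- splitting the integral
  have key : ∀ V ∈ Adm d Ω V₀,
      (∫ x in Ω, f x * (V x - Vf x)) =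
        (∫ x in Ω, f x * V x) - (∫ x in Ω, f x * Vf x) := by
    intro V hV
    have : (fun x => f x * (V x - Vf x)) =
        fun x => f x * V x - f x * Vf x := by funext x; ring
    rw [this, integral_sub (hint V hV) (hint Vf hVfM)]
  have habs : ∀ V ∈ Adm d Ω V₀,
      Integrable (fun x => |V x - Vf x|) (volume.restrict Ω) := fun V hV =>
    ((hintV V hV).sub (hintV Vf hVfM)).abs
  have hb1 : ∀ V ∈ Adm d Ω V₀,
      ∀ᵐ x ∂(volume.restrict Ω), |V x - Vf x| ≤ 1 := by
    intro V hV
    filter_upwards [hV.2.1, hVfM.2.1] with x h1 h2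
    rw [abs_le]; constructor <;> linarith
  have hδnn : ∀ V ∈ Adm d Ω V₀, 0 ≤ ∫ x in Ω, |V x - Vf x| := fun V hV =>
    integral_nonneg fun x => abs_nonneg _
  have hδleB : ∀ V ∈ Adm d Ω V₀,
      (∫ x in Ω, |V x - Vf x|) ≤ (volume Ω).toReal := by
    intro V hV
    calc (∫ x in Ω, |V x - Vf x|) ≤ ∫ _x in Ω, (1 : ℝ) :=
          integral_mono_ae (habs V hV) (integrable_const 1) (hb1 V hV)
      _ = (volume Ω).toReal := by simp [measureReal_def]
  constructor
  · rintro ⟨c, hc, h⟩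
    have hle : Filter.limsup
        (fun δ : ℝ =>
          ⨆ V ∈ { V ∈ Adm d Ω V₀ | (∫ x in Ω, |V x - Vf x|) = δ },
            (((∫ x in Ω, f x * (V x - Vf x)) / δ ^ 2 : ℝ) : EReal))
        (nhdsWithin 0 (Set.Ioi 0)) ≤ ((-c : ℝ) : EReal) := by
      apply Filter.limsup_le_of_le
      · isBoundedDefault
      · filter_upwards [self_mem_nhdsWithin] with δ (hδ : (0:ℝ) < δ)
        refine iSup₂_le fun V hV => ?_
        rw [EReal.coe_le_coe_iff]
        have h1 := h V hV.1
        rw [hV.2] at h1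
        rw [div_le_iff₀ (by positivity), key V hV.1]
        nlinarith
    refine lt_of_le_of_lt hle ?_
    have : ((-c : ℝ) : EReal) < ((0 : ℝ) : EReal) :=
      EReal.coe_lt_coe_iff.2 (by linarith)
    simpa using this
  · intro hlim
    obtain ⟨b, hb1', hb2⟩ := exists_between hlim
    have hbbot : b ≠ ⊥ := fun h => absurd hb1' (by simp [h])
    have hbtop : b ≠ ⊤ := ne_top_of_lt hb2
    lift b to ℝ using ⟨hbtop, hbbot⟩
    have hbneg : b < 0 := by exact_mod_cast hb2
    have hev := Filter.eventually_lt_of_limsup_lt hb1'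
    rw [Filter.eventually_iff, mem_nhdsGT_iff_exists_Ioo_subset] at hev
    obtain ⟨ε, (hε : (0:ℝ) < ε), hsub⟩ := hev
    have hB : 0 < (volume Ω).toReal := lt_trans hV₀ hV₀'
    -- main estimate extracted from the limsup bound
    have main : ∀ δ' ∈ Set.Ioo (0:ℝ) ε, ∀ W ∈ Adm d Ω V₀,
        (∫ x in Ω, |W x - Vf x|) = δ' →
        (∫ x in Ω, f x * (W x - Vf x)) < b * δ' ^ 2 := by
      intro δ' hδ' W hW heq
      have hS := hsub hδ'
      have hmem : W ∈ { V ∈ Adm d Ω V₀ | (∫ x in Ω, |V x - Vf x|) = δ' } :=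
        ⟨hW, heq⟩
      have hterm : (((∫ x in Ω, f x * (W x - Vf x)) / δ' ^ 2 : ℝ) : EReal) ≤
          ⨆ V ∈ { V ∈ Adm d Ω V₀ | (∫ x in Ω, |V x - Vf x|) = δ' },
            (((∫ x in Ω, f x * (V x - Vf x)) / δ' ^ 2 : ℝ) : EReal) :=
        le_iSup₂ (f := fun V (_ : V ∈ _) =>
          (((∫ x in Ω, f x * (V x - Vf x)) / δ' ^ 2 : ℝ) : EReal)) W hmem
      have hlt : ((∫ x in Ω, f x * (W x - Vf x)) / δ' ^ 2 : ℝ) < b := by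
        exact_mod_cast lt_of_le_of_lt hterm hS
      have hδ'pos : (0:ℝ) < δ' ^ 2 := by nlinarith [hδ'.1]
      calc (∫ x in Ω, f x * (W x - Vf x))
          = ((∫ x in Ω, f x * (W x - Vf x)) / δ' ^ 2) * δ' ^ 2 := by
            rw [div_mul_cancel₀ _ hδ'pos.ne']
        _ < b * δ' ^ 2 := mul_lt_mul_of_pos_right hlt hδ'pos
    have hmb : 0 < -b := by linarith
    have hcpos : 0 < min (-b) ((-b) * (ε / 2) / (volume Ω).toReal) :=
      lt_min hmb (by positivity)
    refine ⟨min (-b) ((-b) * (ε / 2) / (volume Ω).toReal), hcpos, ?_⟩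
    have hc1 : min (-b) ((-b) * (ε / 2) / (volume Ω).toReal) ≤ -b := min_le_left _ _
    have hc2 : min (-b) ((-b) * (ε / 2) / (volume Ω).toReal) ≤
        (-b) * (ε / 2) / (volume Ω).toReal := min_le_right _ _
    intro V hV
    rcases eq_or_lt_of_le (hδnn V hV) with h0 | hδpos
    · -- ∫|V - Vf| = 0 : V = Vf a.e.
      have hz : ∀ᵐ x ∂(volume.restrict Ω), |V x - Vf x| = 0 :=
        (integral_eq_zero_iff_of_nonneg_ae
          (Filter.Eventually.of_forall fun x => abs_nonneg (V x - Vf x))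
          (habs V hV)).1 h0.symm
      have heqI : (∫ x in Ω, f x * V x) = ∫ x in Ω, f x * Vf x := by
        refine integral_congr_ae ?_
        filter_upwards [hz] with x hx
        have hVx : V x = Vf x := by
          have := abs_eq_zero.1 hx; linarith
        rw [hVx]
      rw [heqI, ← h0]
      simp
    · by_cases hcase : (∫ x in Ω, |V x - Vf x|) < ε
      · have h1 := main _ ⟨hδpos, hcase⟩ V hV rfl
        rw [key V hV] at h1
        nlinarith [sq_nonneg (∫ x in Ω, |V x - Vf x|), hδnn V hV]
      · push_neg at hcase
        have ht0 : 0 < ε / 2 / (∫ x in Ω, |V x - Vf x|) := by positivity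
        have ht1 : ε / 2 / (∫ x in Ω, |V x - Vf x|) ≤ 1 := by
          rw [div_le_one hδpos]; linarith
        set t : ℝ := ε / 2 / (∫ x in Ω, |V x - Vf x|) with htdef
        have hWAdm : (fun x => Vf x + t * (V x - Vf x)) ∈ Adm d Ω V₀ := by
          refine ⟨hVfM.1.add ((hV.1.sub hVfM.1).const_mul t), ?_, ?_⟩
          · filter_upwards [hV.2.1, hVfM.2.1] with x h1 h2
            exact bathtub_aux_bound t (V x) (Vf x) ht0.le ht1 h1.1 h1.2 h2.1 h2.2
          · have hiVVf : Integrable (fun x => V x - Vf x) (volume.restrict Ω) :=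
              (hintV V hV).sub (hintV Vf hVfM)
            rw [integral_add (hintV Vf hVfM) (hiVVf.const_mul t),
              integral_const_mul,
              integral_sub (hintV V hV) (hintV Vf hVfM), hV.2.2, hVfM.2.2]
            ring
        have hWδ : (∫ x in Ω, |Vf x + t * (V x - Vf x) - Vf x|) = ε / 2 := by
          have he : (fun x => |Vf x + t * (V x - Vf x) - Vf x|) =
              fun x => t * |V x - Vf x| := by
            funext x
            rw [show Vf x + t * (V x - Vf x) - Vf x = t * (V x - Vf x) by ring,
              abs_mul, abs_of_nonneg ht0.le]
          rw [he, integral_const_mul, htdef, div_mul_cancel₀]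
          exact ne_of_gt hδpos
        have h1 := main (ε / 2) ⟨by positivity, by linarith⟩ _ hWAdm hWδ
        have hWint : (∫ x in Ω, f x * (Vf x + t * (V x - Vf x) - Vf x)) =
            t * ∫ x in Ω, f x * (V x - Vf x) := by
          rw [← integral_const_mul]
          refine integral_congr_ae (Filter.Eventually.of_forall fun x => ?_)
          ring
        rw [hWint] at h1
        rw [htdef] at h1
        have hIb := bathtub_aux_unscale (∫ x in Ω, f x * (V x - Vf x)) b ε
          (∫ x in Ω, |V x - Vf x|) hε hδpos h1
        have hfinal := bathtub_aux_combine (∫ x in Ω, f x * (V x - Vf x)) b ε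
          (∫ x in Ω, |V x - Vf x|) (volume Ω).toReal
          (min (-b) ((-b) * (ε / 2) / (volume Ω).toReal)) hε hδpos
          (hδleB V hV) hbneg hB hcpos hc2 hIb
        rw [key V hV] at hfinal
        linarith
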